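/- For all integers n ≥ 1 and m with n ≤ m ≤ 2^n − 1 there exists a family F of n sets such that N(F) = V(F), |V(F)| = m, F has exactly one IE-vector, and this IE-vector is given by x_σ = (−1)^{|σ|+1} for all σ ∈ N(F); in particular all of its m entries are nonzero. -/

import Mathlib

open Finset
open scoped Classical

variable {ι S : Type*}

def region (F : ι → Set S) (τ : Finset ι) : Set S :=
  (⋂ i ∈ τ, F i) \ ⋃ i ∉ τ, F i

def venn (F : ι → Set S) : Set (Finset ι) :=
  {τ | τ.Nonempty ∧ (region F τ).Nonempty}

def nerve (F : ι → Set S) : Set (Finset ι) :=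
  {σ | σ.Nonempty ∧ (⋂ i ∈ σ, F i).Nonempty}

def IsIEVector (F : ι → Set S) (x : Finset ι → ℝ) : Prop :=
  (∀ σ, σ ∉ nerve F → x σ = 0) ∧
  ∀ τ ∈ venn F, (∑ σ ∈ τ.powerset.filter (· ∈ nerve F), x σ) = 1

/-- Any two IE-vectors agree when the nerve is contained in the Venn diagram. -/
lemma IE_unique (F : ι → Set S) (hsub : ∀ σ, σ ∈ nerve F → σ ∈ venn F)
    (x y : Finset ι → ℝ) (hx : IsIEVector F x) (hy : IsIEVector F y) : x = y := by
  funext σ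
  induction σ using Finset.strongInduction with
  | _ σ IH =>
    by_cases hσ : σ ∈ nerve F
    · have h1 := hx.2 σ (hsub σ hσ)
      have h2 := hy.2 σ (hsub σ hσ)
      have hmem : σ ∈ σ.powerset.filter (· ∈ nerve F) := by
        simp [Finset.mem_filter, hσ]
      rw [← Finset.add_sum_erase _ _ hmem] at h1 h2
      have hsum : ∑ ρ ∈ (σ.powerset.filter (· ∈ nerve F)).erase σ, x ρ =
          ∑ ρ ∈ (σ.powerset.filter (· ∈ nerve F)).erase σ, y ρ := by
        refine Finset.sum_congr rfl fun ρ hρ => ?_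
        have hρ' := Finset.mem_of_mem_erase hρ
        have hne := Finset.ne_of_mem_erase hρ
        have hρsub : ρ ⊆ σ := Finset.mem_powerset.1 (Finset.mem_filter.1 hρ').1
        exact IH ρ (Finset.ssubset_iff_subset_ne.2 ⟨hρsub, hne⟩)
      linarith
    · rw [hx.1 σ hσ, hy.1 σ hσ]

/-- for all `n ≥ 1` and `n ≤ m ≤ 2^n − 1` there is a family of `n` sets with
`N(F) = V(F)`, `|V(F)| = m`, and a unique IE-vector, namely `x_σ = (−1)^{|σ|+1}` on the
nerve (and `0` off it); in particular all of its `m` entries are nonzero. -/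
theorem stmt15 (n m : ℕ) (hn : 1 ≤ n) (hnm : n ≤ m) (hm : m ≤ 2 ^ n - 1) :
    ∃ (S : Type) (F : Fin n → Set S),
      nerve F = venn F ∧ (venn F).ncard = m ∧
      (∀ x : Finset (Fin n) → ℝ, IsIEVector F x ↔
        x = fun σ => if σ ∈ nerve F then (-1 : ℝ) ^ (σ.card + 1) else 0) ∧
      (∀ x : Finset (Fin n) → ℝ, IsIEVector F x → {σ | x σ ≠ 0}.ncard = m) := by
  classical
  -- the binary value of a finset
  set val : Finset (Fin n) → ℕ := fun σ => ∑ i ∈ σ, 2 ^ (i : ℕ) with hval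
  have val_inj : Function.Injective val := by
    intro σ τ h
    have : (σ.map Fin.valEmbedding) = (τ.map Fin.valEmbedding) := by
      apply Finset.geomSum_injective (le_refl 2)
      simpa [val, Finset.sum_map] using h
    exact Finset.map_injective _ this
  have val_mono : ∀ σ τ : Finset (Fin n), σ ⊆ τ → val σ ≤ val τ := fun σ τ h =>
    Finset.sum_le_sum_of_subset h
  have val_pos : ∀ σ : Finset (Fin n), σ.Nonempty → 1 ≤ val σ := by
    rintro σ ⟨i, hi⟩
    exact le_trans (Nat.one_le_two_pow (n := (i : ℕ)))
      (Finset.single_le_sum (f := fun i : Fin n => 2 ^ (i : ℕ)) (fun _ _ => Nat.zero_le _) hi)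
  have val_surj : ∀ k : ℕ, k < 2 ^ n → ∃ σ : Finset (Fin n), val σ = k := by
    intro k hk
    have hlt : ∀ a ∈ k.bitIndices.toFinset, a < n := by
      intro a ha
      rw [List.mem_toFinset] at ha
      have h2 : 2 ^ a ≤ k := Nat.two_pow_le_of_mem_bitIndices ha
      exact (Nat.pow_lt_pow_iff_right (by norm_num)).1 (lt_of_le_of_lt h2 hk)
    refine ⟨(k.bitIndices.toFinset).attachFin hlt, ?_⟩
    have hmap : ((k.bitIndices.toFinset).attachFin hlt).map Fin.valEmbedding
        = k.bitIndices.toFinset := by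
      ext a
      simp only [Finset.mem_map, Finset.mem_attachFin, Fin.valEmbedding_apply]
      constructor
      · rintro ⟨i, hi, rfl⟩; exact hi
      · intro ha; exact ⟨⟨a, hlt a ha⟩, ha, rfl⟩
    have : val ((k.bitIndices.toFinset).attachFin hlt)
        = ∑ a ∈ ((k.bitIndices.toFinset).attachFin hlt).map Fin.valEmbedding, 2 ^ a := by
      rw [Finset.sum_map]; rfl
    rw [this, hmap]
    exact Finset.twoPowSum_toFinset_bitIndices k
  -- the family
  set F : Fin n → Set (Finset (Fin n)) :=
    fun i => {τ | (τ.Nonempty ∧ val τ ≤ m) ∧ i ∈ τ} with hF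
  have hm' : m < 2 ^ n := lt_of_le_of_lt hm (Nat.sub_lt (Nat.two_pow_pos n) one_pos)
  -- membership in the nerve
  have nerve_eq : nerve F = {σ | σ.Nonempty ∧ val σ ≤ m} := by
    ext σ
    simp only [nerve, Set.mem_setOf_eq, Set.mem_iInter]
    constructor
    · rintro ⟨hne, p, hp⟩
      refine ⟨hne, ?_⟩
      simp only [Set.mem_iInter] at hp
      obtain ⟨i0, hi0⟩ := hne
      have hp0 := hp i0 hi0
      have hpV : p.Nonempty ∧ val p ≤ m := hp0.1
      have hsub : σ ⊆ p := fun i hi => (hp i hi).2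
      exact le_trans (val_mono _ _ hsub) hpV.2
    · rintro ⟨hne, hle⟩
      exact ⟨hne, σ, by simp only [Set.mem_iInter]; exact fun i hi => ⟨⟨hne, hle⟩, hi⟩⟩
  have venn_eq : venn F = {σ | σ.Nonempty ∧ val σ ≤ m} := by
    ext τ
    simp only [venn, Set.mem_setOf_eq]
    constructor
    · rintro ⟨hne, p, hp⟩
      refine ⟨hne, ?_⟩
      obtain ⟨hpin, hpout⟩ := hp
      simp only [Set.mem_iInter] at hpin
      obtain ⟨i0, hi0⟩ := hne
      have hp0 := hpin i0 hi0
      have hpV : p.Nonempty ∧ val p ≤ m := hp0.1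
      have hsub : τ ⊆ p := fun i hi => (hpin i hi).2
      have hsub2 : p ⊆ τ := by
        intro i hi
        by_contra hiτ
        exact hpout (Set.mem_iUnion.2 ⟨i, Set.mem_iUnion.2 ⟨hiτ, ⟨hpV, hi⟩⟩⟩)
      have : p = τ := Finset.Subset.antisymm hsub2 hsub
      exact this ▸ hpV.2
    · rintro ⟨hne, hle⟩
      refine ⟨hne, τ, ?_, ?_⟩
      · simp only [Set.mem_iInter]; exact fun i hi => ⟨⟨hne, hle⟩, hi⟩
      · intro hmem
        rw [Set.mem_iUnion] at hmem
        obtain ⟨i, hi⟩ := hmem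
        rw [Set.mem_iUnion] at hi
        obtain ⟨hiτ, hτF⟩ := hi
        exact hiτ hτF.2
  have hNV : nerve F = venn F := by rw [nerve_eq, venn_eq]
  -- downward closure of the nerve
  have hdown : ∀ σ τ : Finset (Fin n), σ.Nonempty → σ ⊆ τ → τ ∈ nerve F → σ ∈ nerve F := by
    intro σ τ hne hsub hτ
    rw [nerve_eq] at *
    exact ⟨hne, le_trans (val_mono _ _ hsub) hτ.2⟩
  -- cardinality
  have hcard : (venn F).ncard = m := by
    rw [venn_eq]
    have : {σ : Finset (Fin n) | σ.Nonempty ∧ val σ ≤ m} =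
        ↑(Finset.univ.filter (fun σ : Finset (Fin n) => σ.Nonempty ∧ val σ ≤ m)) := by
      ext σ; simp
    rw [this, Set.ncard_coe_finset]
    have himg : (Finset.univ.filter (fun σ : Finset (Fin n) => σ.Nonempty ∧ val σ ≤ m)).image val
        = Finset.Icc 1 m := by
      ext k
      simp only [Finset.mem_image, Finset.mem_filter, Finset.mem_univ, true_and, Finset.mem_Icc]
      constructor
      · rintro ⟨σ, ⟨hne, hle⟩, rfl⟩
        exact ⟨val_pos σ hne, hle⟩
      · rintro ⟨h1, h2⟩
        obtain ⟨σ, hσ⟩ := val_surj k (lt_of_le_of_lt h2 hm')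
        refine ⟨σ, ⟨?_, hσ ▸ h2⟩, hσ⟩
        rw [Finset.nonempty_iff_ne_empty]
        rintro rfl
        simp only [val, Finset.sum_empty] at hσ
        omega
    have := Finset.card_image_of_injective
      (Finset.univ.filter (fun σ : Finset (Fin n) => σ.Nonempty ∧ val σ ≤ m)) val_inj
    rw [himg] at this
    rw [← this, Nat.card_Icc]
    omega
  -- the canonical vector is an IE-vector
  set x₀ : Finset (Fin n) → ℝ :=
    fun σ => if σ ∈ nerve F then (-1 : ℝ) ^ (σ.card + 1) else 0 with hx₀
  have hx₀IE : IsIEVector F x₀ := by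
    constructor
    · intro σ hσ; rw [hx₀]; exact if_neg hσ
    · intro τ hτ
      have hτn : τ ∈ nerve F := hNV ▸ hτ
      have hτne : τ.Nonempty := hτn.1
      have hfilter : τ.powerset.filter (· ∈ nerve F) = τ.powerset.filter (·.Nonempty) := by
        apply Finset.filter_congr
        intro σ hσ
        rw [Finset.mem_powerset] at hσ
        exact ⟨fun h => h.1, fun h => hdown σ τ h hσ hτn⟩
      rw [hfilter]
      have hsum : ∀ σ ∈ τ.powerset.filter (·.Nonempty), x₀ σ = (-1 : ℝ) ^ (σ.card + 1) := by
        intro σ hσ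
        rw [Finset.mem_filter, Finset.mem_powerset] at hσ
        have : σ ∈ nerve F := hdown σ τ hσ.2 hσ.1 hτn
        simp [x₀, this]
      rw [Finset.sum_congr rfl hsum]
      have key : (∑ σ ∈ τ.powerset, (-1 : ℝ) ^ (σ.card)) = 0 := by
        have h := Finset.sum_powerset_neg_one_pow_card_of_nonempty (x := τ) hτne
        calc (∑ σ ∈ τ.powerset, (-1 : ℝ) ^ (σ.card))
            = ((∑ σ ∈ τ.powerset, (-1 : ℤ) ^ σ.card : ℤ) : ℝ) := by push_cast; rfl
          _ = 0 := by rw [h]; norm_num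
      have hsplit : τ.powerset = insert ∅ (τ.powerset.filter (·.Nonempty)) := by
        ext σ
        simp only [Finset.mem_insert, Finset.mem_filter, Finset.mem_powerset]
        constructor
        · intro h
          rcases Finset.eq_empty_or_nonempty σ with rfl | hne
          · exact Or.inl rfl
          · exact Or.inr ⟨h, hne⟩
        · rintro (rfl | ⟨h, _⟩)
          · exact Finset.empty_subset τ
          · exact h
      rw [hsplit, Finset.sum_insert (by simp [Finset.not_nonempty_empty])] at key
      simp only [Finset.card_empty, pow_zero] at key
      have : ∑ σ ∈ τ.powerset.filter (·.Nonempty), (-1 : ℝ) ^ σ.card = -1 := by linarith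
      calc ∑ σ ∈ τ.powerset.filter (·.Nonempty), (-1 : ℝ) ^ (σ.card + 1)
          = ∑ σ ∈ τ.powerset.filter (·.Nonempty), (-1 : ℝ) ^ σ.card * (-1) := by
            refine Finset.sum_congr rfl fun σ _ => ?_; ring
        _ = (∑ σ ∈ τ.powerset.filter (·.Nonempty), (-1 : ℝ) ^ σ.card) * (-1) := by
            rw [Finset.sum_mul]
        _ = 1 := by rw [this]; ring
  refine ⟨Finset (Fin n), F, hNV, hcard, ?_, ?_⟩
  · intro x
    constructor
    · intro hx
      exact IE_unique F (fun σ hσ => hNV ▸ hσ) x x₀ hx hx₀IE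
    · rintro rfl
      exact hx₀IE
  · intro x hx
    have hxeq : x = x₀ := IE_unique F (fun σ hσ => hNV ▸ hσ) x x₀ hx hx₀IE
    subst hxeq
    have : {σ | x₀ σ ≠ 0} = nerve F := by
      ext σ
      simp only [Set.mem_setOf_eq, hx₀]
      by_cases h : σ ∈ nerve F
      · simp only [h, if_true, iff_true]
        exact pow_ne_zero _ (by norm_num)
      · simp [h]
    rw [this, hNV, hcard]
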